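/- Let J : ℝ^d → ℝ be differentiable with L_g-Lipschitz gradient for some L_g > 0. Let α > 0, let θ, d ∈ ℝ^d, and set θ' = θ + α·d/‖d‖ (with the convention 0/‖0‖ = 0). Then −J(θ') ≤ −J(θ) − α‖d‖ + α‖d − ∇J(θ)‖ + L_g α²/2. -/

import Mathlib

open scoped RealInnerProductSpace

/-- Descent lemma. -/
theorem descent_lemma_aux
    {dim : ℕ}
    (J : EuclideanSpace ℝ (Fin dim) → ℝ) (Lg : ℝ) (hLg : 0 ≤ Lg)
    (hdiff : Differentiable ℝ J)
    (hlip : ∀ x y, ‖gradient J x - gradient J y‖ ≤ Lg * ‖x - y‖)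
    (x y : EuclideanSpace ℝ (Fin dim)) :
    J x + ⟪gradient J x, y - x⟫ - Lg / 2 * ‖y - x‖ ^ 2 ≤ J y := by
  set v := y - x with hv
  set c : ℝ := ⟪gradient J x, v⟫ with hc
  set h : ℝ → ℝ := fun t => J (x + t • v) - t * c + Lg * ‖v‖ ^ 2 / 2 * t ^ 2 with hh
  have hderiv : ∀ t : ℝ, HasDerivAt h
      (⟪gradient J (x + t • v), v⟫ - c + Lg * ‖v‖ ^ 2 / 2 * (2 * t)) t := by
    intro t
    have hL : HasDerivAt (fun t : ℝ => x + t • v) v t := by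
      simpa using ((hasDerivAt_id t).smul_const v).const_add x
    have hJ : HasDerivAt (fun t : ℝ => J (x + t • v)) (⟪gradient J (x + t • v), v⟫) t := by
      have := ((hdiff (x + t • v)).hasGradientAt.hasFDerivAt).comp_hasDerivAt t hL
      simp [InnerProductSpace.toDual_apply_apply] at this ⊢; exact this
    have h1 : HasDerivAt (fun t : ℝ => t * c) c t := hasDerivAt_mul_const c
    have h2 : HasDerivAt (fun t : ℝ => Lg * ‖v‖ ^ 2 / 2 * t ^ 2)
        (Lg * ‖v‖ ^ 2 / 2 * (2 * t)) t := by
      simpa using (hasDerivAt_pow 2 t).const_mul (Lg * ‖v‖ ^ 2 / 2)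
    exact (hJ.sub h1).add h2
  have hmono : MonotoneOn h (Set.Icc (0 : ℝ) 1) := by
    apply monotoneOn_of_deriv_nonneg (convex_Icc 0 1)
    · exact fun t _ => (hderiv t).continuousAt.continuousWithinAt
    · intro t ht
      exact (hderiv t).differentiableAt.differentiableWithinAt
    · intro t ht
      rw [interior_Icc] at ht
      rw [(hderiv t).deriv]
      have hin : ⟪gradient J (x + t • v) - gradient J x, v⟫ ≥ -(Lg * t * ‖v‖ ^ 2) := by
        have h1 : |⟪gradient J (x + t • v) - gradient J x, v⟫| ≤
            ‖gradient J (x + t • v) - gradient J x‖ * ‖v‖ := abs_real_inner_le_norm _ _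
        have h2 : ‖gradient J (x + t • v) - gradient J x‖ ≤ Lg * (t * ‖v‖) := by
          have := hlip (x + t • v) x
          simpa [norm_smul, abs_of_pos ht.1] using this
        nlinarith [abs_nonneg (⟪gradient J (x + t • v) - gradient J x, v⟫),
          neg_abs_le (⟪gradient J (x + t • v) - gradient J x, v⟫), norm_nonneg v,
          mul_le_mul_of_nonneg_right h2 (norm_nonneg v)]
      rw [inner_sub_left] at hin
      simp only [hc] at hin ⊢
      nlinarith
  have h01 := hmono (Set.mem_Icc.2 ⟨le_refl 0, zero_le_one⟩)
    (Set.mem_Icc.2 ⟨zero_le_one, le_refl 1⟩) zero_le_one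
  simp only [hh, zero_smul, add_zero, zero_mul, one_smul, one_pow, mul_one] at h01
  have hxy : x + v = y := by simp [hv]
  rw [hxy] at h01
  nlinarith [h01]

/-- Descent lemma for the normalized step (Lemma 1, intermediate form):
`−J(θ') ≤ −J(θ) − α‖d‖ + α‖d − ∇J(θ)‖ + L_g α²/2`. -/
theorem normalized_step_descent_direction_form
    {dim : ℕ} (hdim : 0 < dim)
    (J : EuclideanSpace ℝ (Fin dim) → ℝ) (Lg : ℝ) (hLg : 0 < Lg)
    (hdiff : Differentiable ℝ J)
    (hlip : ∀ x y, ‖gradient J x - gradient J y‖ ≤ Lg * ‖x - y‖)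
    (α : ℝ) (hα : 0 < α) (θ dvec : EuclideanSpace ℝ (Fin dim))
    (θ' : EuclideanSpace ℝ (Fin dim))
    (hθ' : θ' = θ + α • (‖dvec‖⁻¹ • dvec)) :
    -J θ' ≤ -J θ - α * ‖dvec‖ + α * ‖dvec - gradient J θ‖ + Lg * α ^ 2 / 2 := by
  set u : EuclideanSpace ℝ (Fin dim) := ‖dvec‖⁻¹ • dvec with hu
  have hdesc := descent_lemma_aux J Lg hLg.le hdiff hlip θ θ'
  have hv : θ' - θ = α • u := by rw [hθ']; abel
  have hnu : ‖u‖ ≤ 1 := by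
    rcases eq_or_ne dvec 0 with h0 | h0
    · simp [hu, h0]
    · have : ‖u‖ = 1 := by
        rw [hu, norm_smul, norm_inv, norm_norm,
          inv_mul_cancel₀ (norm_ne_zero_iff.2 h0)]
      simp [this]
  have hnv : ‖θ' - θ‖ ^ 2 ≤ α ^ 2 := by
    rw [hv, norm_smul, Real.norm_eq_abs, abs_of_pos hα, mul_pow]
    have h1 : ‖u‖ ^ 2 ≤ 1 := by nlinarith [norm_nonneg u]
    nlinarith [sq_nonneg α]
  have hinner : ⟪gradient J θ, u⟫ ≥ ‖dvec‖ - ‖dvec - gradient J θ‖ := by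
    have hsplit : ⟪gradient J θ, u⟫ = ⟪dvec, u⟫ - ⟪dvec - gradient J θ, u⟫ := by
      rw [inner_sub_left]; ring
    rcases eq_or_ne dvec 0 with h0 | h0
    · have : u = 0 := by simp [hu, h0]
      simp [this, h0, inner_zero_right]
    · have hdu : ⟪dvec, u⟫ = ‖dvec‖ := by
        rw [hu, real_inner_smul_right, real_inner_self_eq_norm_sq, sq, mul_comm ‖dvec‖⁻¹,
          mul_assoc, mul_inv_cancel₀ (norm_ne_zero_iff.2 h0), mul_one]
      have hbd : ⟪dvec - gradient J θ, u⟫ ≤ ‖dvec - gradient J θ‖ := by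
        calc ⟪dvec - gradient J θ, u⟫ ≤ ‖dvec - gradient J θ‖ * ‖u‖ :=
              real_inner_le_norm _ _
          _ ≤ ‖dvec - gradient J θ‖ * 1 :=
              mul_le_mul_of_nonneg_left hnu (norm_nonneg _)
          _ = _ := mul_one _
      rw [hsplit, hdu]
      linarith
  have hiv : ⟪gradient J θ, θ' - θ⟫ = α * ⟪gradient J θ, u⟫ := by
    rw [hv, real_inner_smul_right]
  rw [hiv] at hdesc
  have : α * ⟪gradient J θ, u⟫ ≥ α * ‖dvec‖ - α * ‖dvec - gradient J θ‖ := by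
    nlinarith
  nlinarith [hdesc, hnv, mul_le_mul_of_nonneg_left hnv (by positivity : (0:ℝ) ≤ Lg / 2)]
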